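/- Let G and G′ be finite connected simple graphs, each with minimal degree at least 2, neither of which is a cycle graph, and suppose that for every edge f of G the graph G - f is connected and for every edge f′ of G′ the graph G′ - f′ is connected. Suppose G and G′ have the same edge deck, witnessed by a bijection σ : E(G) → E(G′) with G - f isomorphic to G′ - σ(f) for every edge f of G. Then for every edge e of G, the minimal length of a cycle of G containing e equals the minimal length of a cycle of G′ containing σ(e). -/

import Mathlib

namespace MinCycAux

open SimpleGraph Finset

variable {V : Type*} {W : Type*}

/-- Number of cycle walks of length `n`. -/
noncomputable def cycN (G : SimpleGraph V) (n : ℕ) : ℕ :=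
  Nat.card {p : Σ v : V, G.Walk v v // p.2.IsCycle ∧ p.2.length = n}

/-- Number of cycle walks of length `n` through `f`. -/
noncomputable def cycThru (G : SimpleGraph V) (f : Sym2 V) (n : ℕ) : ℕ :=
  Nat.card {p : Σ v : V, G.Walk v v // p.2.IsCycle ∧ p.2.length = n ∧ f ∈ p.2.edges}

/-- Number of cycle walks of length `n` avoiding `f`. -/
noncomputable def cycAvoid (G : SimpleGraph V) (f : Sym2 V) (n : ℕ) : ℕ :=
  Nat.card {p : Σ v : V, G.Walk v v // p.2.IsCycle ∧ p.2.length = n ∧ f ∉ p.2.edges}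

lemma finite_aux [Finite V] (G : SimpleGraph V) (n : ℕ)
    {P : (Σ v : V, G.Walk v v) → Prop} (h : ∀ p, P p → p.2.length = n) :
    Finite {p : Σ v : V, G.Walk v v // P p} := by
  classical
  cases nonempty_fintype V
  have : ∀ v : V, Fintype (G.neighborSet v) := fun v => Fintype.ofFinite _
  refine Finite.of_injective
    (fun p => (⟨p.1.1, ⟨p.1.2, h _ p.2⟩⟩ : Σ v : V, {w : G.Walk v v // w.length = n})) ?_
  rintro ⟨⟨v, w⟩, hp⟩ ⟨⟨v', w'⟩, hp'⟩ hh
  obtain ⟨rfl, h2⟩ := Sigma.mk.inj_iff.mp hh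
  have hw : w = w' := by simpa using h2
  subst hw; rfl

lemma cycN_le_of_iso [Finite W] {A : SimpleGraph V} {B : SimpleGraph W}
    (φ : A ≃g B) (n : ℕ) : cycN A n ≤ cycN B n := by
  have : Finite {p : Σ w : W, B.Walk w w // p.2.IsCycle ∧ p.2.length = n} :=
    finite_aux B n (fun p h => h.2)
  refine Nat.card_le_card_of_injective
    (fun p => ⟨⟨φ p.1.1, p.1.2.map φ.toHom⟩,
      ⟨Walk.IsCycle.map (f := φ.toHom) (fun a b h => φ.injective h) p.2.1, by simp [p.2.2]⟩⟩) ?_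
  rintro ⟨⟨v, w⟩, hp⟩ ⟨⟨v', w'⟩, hp'⟩ hh
  have hh' := Subtype.ext_iff.mp hh
  obtain ⟨h1, h2⟩ := Sigma.mk.inj_iff.mp hh'
  have hv : v = v' := φ.toEquiv.injective h1
  subst hv
  have hw : w.map φ.toHom = w'.map φ.toHom := by simpa using h2
  have hw' : w = w' := Walk.map_injective_of_injective φ.toEquiv.injective _ _ hw
  subst hw'; rfl

lemma cycN_iso [Finite V] [Finite W] {A : SimpleGraph V} {B : SimpleGraph W}
    (φ : A ≃g B) (n : ℕ) : cycN A n = cycN B n :=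
  le_antisymm (cycN_le_of_iso φ n) (cycN_le_of_iso φ.symm n)

lemma cycN_deleteEdges (G : SimpleGraph V) (f : Sym2 V) (n : ℕ) :
    cycN (G.deleteEdges {f}) n = cycAvoid G f n := by
  have hup : ∀ {v : V} (w : (G.deleteEdges {f}).Walk v v), ∀ e ∈ w.edges, e ∈ G.edgeSet :=
    fun w e he => ((G.edgeSet_deleteEdges {f}) ▸ w.edges_subset_edgeSet he).1
  have hnotf : ∀ {v : V} (w : (G.deleteEdges {f}).Walk v v), f ∉ w.edges := by
    intro v w hf
    have := (G.edgeSet_deleteEdges {f}) ▸ w.edges_subset_edgeSet hf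
    exact this.2 rfl
  refine Nat.card_congr ?_
  refine
    { toFun := fun p => ⟨⟨p.1.1, p.1.2.transfer G (hup p.1.2)⟩,
        ⟨p.2.1.transfer _, by
          constructor
          · rw [Walk.length_transfer]; exact p.2.2
          · rw [Walk.edges_transfer]; exact hnotf p.1.2⟩⟩
      invFun := fun q => ⟨⟨q.1.1, q.1.2.transfer (G.deleteEdges {f})
          (fun e he => by
            rw [G.edgeSet_deleteEdges]
            exact ⟨q.1.2.edges_subset_edgeSet he, by rintro rfl; exact q.2.2.2 he⟩)⟩,
        ⟨q.2.1.transfer _, by rw [Walk.length_transfer]; exact q.2.2.1⟩⟩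
      left_inv := ?_
      right_inv := ?_ }
  · rintro ⟨⟨v, w⟩, hp⟩
    refine Subtype.ext (Sigma.ext rfl (heq_of_eq ?_))
    simp only [Walk.transfer_transfer]
    exact w.transfer_self
  · rintro ⟨⟨v, w⟩, hp⟩
    refine Subtype.ext (Sigma.ext rfl (heq_of_eq ?_))
    simp only [Walk.transfer_transfer]
    exact w.transfer_self

lemma cycN_split [Finite V] (G : SimpleGraph V) (f : Sym2 V) (n : ℕ) :
    cycN G n = cycThru G f n + cycAvoid G f n := by
  have h1 : Finite {p : Σ v : V, G.Walk v v // p.2.IsCycle ∧ p.2.length = n ∧ f ∈ p.2.edges} :=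
    finite_aux G n (fun p h => h.2.1)
  have h2 : Finite {p : Σ v : V, G.Walk v v // p.2.IsCycle ∧ p.2.length = n ∧ f ∉ p.2.edges} :=
    finite_aux G n (fun p h => h.2.1)
  rw [cycN, cycThru, cycAvoid, ← Nat.card_sum]
  refine Nat.card_congr ?_
  classical
  calc {p : Σ v : V, G.Walk v v // p.2.IsCycle ∧ p.2.length = n}
      ≃ {q : {p : Σ v : V, G.Walk v v // p.2.IsCycle ∧ p.2.length = n} // f ∈ q.1.2.edges} ⊕
        {q : {p : Σ v : V, G.Walk v v // p.2.IsCycle ∧ p.2.length = n} // f ∉ q.1.2.edges} :=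
        (Equiv.sumCompl _).symm
    _ ≃ _ := by
        refine Equiv.sumCongr ?_ ?_
        · exact (Equiv.subtypeSubtypeEquivSubtypeInter
              (fun p : Σ v : V, G.Walk v v => p.2.IsCycle ∧ p.2.length = n)
              (fun p => f ∈ p.2.edges)).trans
            (Equiv.subtypeEquivRight (fun p => by tauto))
        · exact (Equiv.subtypeSubtypeEquivSubtypeInter
              (fun p : Σ v : V, G.Walk v v => p.2.IsCycle ∧ p.2.length = n)
              (fun p => f ∉ p.2.edges)).trans
            (Equiv.subtypeEquivRight (fun p => by tauto))

lemma cycThru_le [Finite V] (G : SimpleGraph V) (f : Sym2 V) (n : ℕ) :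
    cycThru G f n ≤ cycN G n := by
  have : Finite {p : Σ v : V, G.Walk v v // p.2.IsCycle ∧ p.2.length = n} :=
    finite_aux G n (fun p h => h.2)
  refine Nat.card_le_card_of_injective (fun p => ⟨p.1, p.2.1, p.2.2.1⟩) ?_
  intro p q h
  apply Subtype.ext
  have := congrArg Subtype.val h
  simpa using this

lemma kelly [Fintype V] (G : SimpleGraph V) [Fintype G.edgeSet] (n : ℕ) :
    ∑ f : G.edgeSet, cycAvoid G (f : Sym2 V) n = cycN G n * (Nat.card G.edgeSet - n) := by
  rw [Nat.card_eq_fintype_card]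
  classical
  have hFin : Finite {p : Σ v : V, G.Walk v v // p.2.IsCycle ∧ p.2.length = n} :=
    finite_aux G n (fun p h => h.2)
  have := Fintype.ofFinite {p : Σ v : V, G.Walk v v // p.2.IsCycle ∧ p.2.length = n}
  have h1 : ∀ f : G.edgeSet, cycAvoid G (f : Sym2 V) n =
      (Finset.univ.filter
        (fun q : {p : Σ v : V, G.Walk v v // p.2.IsCycle ∧ p.2.length = n} =>
          (f : Sym2 V) ∉ q.1.2.edges)).card := by
    intro f
    rw [cycAvoid]
    rw [Nat.card_congr
      ((Equiv.subtypeEquivRight (fun p => (and_assoc).symm)).trans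
        (Equiv.subtypeSubtypeEquivSubtypeInter _ _).symm)]
    rw [Nat.card_eq_fintype_card, Fintype.card_subtype]
  have h2 : ∀ q : {p : Σ v : V, G.Walk v v // p.2.IsCycle ∧ p.2.length = n},
      (Finset.univ.filter (fun f : G.edgeSet => (f : Sym2 V) ∉ q.1.2.edges)).card =
        Fintype.card G.edgeSet - n := by
    rintro ⟨⟨v, w⟩, hc, hl⟩
    dsimp only at hc hl ⊢
    have hmem : (Finset.univ.filter (fun f : G.edgeSet => (f : Sym2 V) ∈ w.edges)).card = n := by
      rw [← hl, ← Walk.length_edges, ← List.toFinset_card_of_nodup hc.isCircuit.isTrail.edges_nodup]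
      refine Finset.card_bij (fun f _ => (f : Sym2 V)) ?_ ?_ ?_
      · intro f hf
        simp only [Finset.mem_filter] at hf
        simpa using hf.2
      · intro f hf g hg h
        exact Subtype.ext h
      · intro b hb
        simp only [List.mem_toFinset] at hb
        exact ⟨⟨b, w.edges_subset_edgeSet hb⟩, by simpa using hb, rfl⟩
    have htot := Finset.card_filter_add_card_filter_not
      (s := (Finset.univ : Finset G.edgeSet))
      (p := fun f : G.edgeSet => (f : Sym2 V) ∈ w.edges)
    rw [Finset.card_univ, hmem] at htot
    omega
  calc ∑ f : G.edgeSet, cycAvoid G (f : Sym2 V) n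
      = ∑ f : G.edgeSet,
          ∑ q : {p : Σ v : V, G.Walk v v // p.2.IsCycle ∧ p.2.length = n},
            if (f : Sym2 V) ∉ q.1.2.edges then 1 else 0 := by
        refine Finset.sum_congr rfl (fun f _ => ?_)
        rw [h1 f, Finset.card_filter]
    _ = ∑ q : {p : Σ v : V, G.Walk v v // p.2.IsCycle ∧ p.2.length = n},
          ∑ f : G.edgeSet, if (f : Sym2 V) ∉ q.1.2.edges then 1 else 0 :=
        Finset.sum_comm
    _ = ∑ q : {p : Σ v : V, G.Walk v v // p.2.IsCycle ∧ p.2.length = n},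
          (Fintype.card G.edgeSet - n) := by
        refine Finset.sum_congr rfl (fun q _ => ?_)
        rw [← Finset.card_filter]
        exact h2 q
    _ = cycN G n * (Fintype.card G.edgeSet - n) := by
        rw [Finset.sum_const, Finset.card_univ, smul_eq_mul, cycN, Nat.card_eq_fintype_card]

lemma cycN_eq_zero [Fintype V] (G : SimpleGraph V) [DecidableRel G.Adj]
    (hdeg : ∀ v, 2 ≤ G.degree v) (hnr : ¬ G.IsRegularOfDegree 2)
    {n : ℕ} (hn : Nat.card G.edgeSet ≤ n) : cycN G n = 0 := by
  classical
  rw [cycN, Nat.card_eq_zero]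
  left
  constructor
  rintro ⟨⟨v, w⟩, hc0, hl0⟩
  have hc : w.IsCycle := hc0
  have hl : w.length = n := hl0
  have hlen : n ≤ Fintype.card V := by
    have h1 : w.support.tail.length ≤ Fintype.card V := hc.support_nodup.length_le_card
    have h2 : w.support.tail.length = w.length := by
      rw [List.length_tail, Walk.length_support]
      omega
    omega
  have hcard : Fintype.card V < Nat.card G.edgeSet := by
    obtain ⟨v0, hv0⟩ := not_forall.mp hnr
    have h3 : 3 ≤ G.degree v0 := by have := hdeg v0; omega
    have hsum : ∑ v : V, G.degree v = 2 * Nat.card G.edgeSet := by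
      rw [Nat.card_eq_fintype_card, ← G.edgeFinset_card]
      exact G.sum_degrees_eq_twice_card_edges
    have hlt : 2 * Fintype.card V < ∑ v : V, G.degree v := by
      calc 2 * Fintype.card V = ∑ _v : V, 2 := by
            rw [Finset.sum_const, Finset.card_univ, smul_eq_mul, mul_comm]
        _ < ∑ v : V, G.degree v :=
            Finset.sum_lt_sum (fun i _ => hdeg i) ⟨v0, Finset.mem_univ _, by omega⟩
    omega
  omega

lemma exists_iff_cycThru_ne_zero [Finite V] (G₀ : SimpleGraph V) (f : Sym2 V) (n : ℕ) :
    (∃ (v : V) (c : G₀.Walk v v), c.IsCycle ∧ f ∈ c.edges ∧ c.length = n) ↔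
      cycThru G₀ f n ≠ 0 := by
  have : Finite {p : Σ v : V, G₀.Walk v v // p.2.IsCycle ∧ p.2.length = n ∧ f ∈ p.2.edges} :=
    finite_aux G₀ n (fun p h => h.2.1)
  rw [cycThru, Nat.card_ne_zero]
  constructor
  · rintro ⟨v, c, h1, h2, h3⟩
    exact ⟨⟨⟨⟨v, c⟩, h1, h3, h2⟩⟩, this⟩
  · rintro ⟨⟨⟨⟨v, c⟩, h1, h3, h2⟩⟩, -⟩
    exact ⟨v, c, h1, h2, h3⟩

end MinCycAux

open MinCycAux in
/-- for two finite connected simple graphs of minimal degree at least 2,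
neither a cycle graph, all of whose edge-deleted subgraphs are connected, having the same
edge deck (witnessed by `σ`), the minimal length of a cycle through an edge `e` of `G`
equals the minimal length of a cycle through `σ e` in `G'`. -/
theorem minimal_cycle_length_edge_reconstructible {V V' : Type*}
    [Fintype V] [Fintype V'] [DecidableEq V] [DecidableEq V']
    (G : SimpleGraph V) (G' : SimpleGraph V')
    [DecidableRel G.Adj] [DecidableRel G'.Adj]
    (hconn : G.Connected) (hconn' : G'.Connected)
    (hdeg : ∀ v, 2 ≤ G.degree v) (hdeg' : ∀ v, 2 ≤ G'.degree v)
    (hnc : ¬ (G.Connected ∧ G.IsRegularOfDegree 2))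
    (hnc' : ¬ (G'.Connected ∧ G'.IsRegularOfDegree 2))
    (hbridgeless : ∀ f ∈ G.edgeSet, (G.deleteEdges {f}).Connected)
    (hbridgeless' : ∀ f' ∈ G'.edgeSet, (G'.deleteEdges {f'}).Connected)
    (σ : G.edgeSet ≃ G'.edgeSet)
    (hdeck : ∀ f : G.edgeSet,
      Nonempty ((G.deleteEdges {(f : Sym2 V)}) ≃g (G'.deleteEdges {((σ f : Sym2 V'))})))
    (e : G.edgeSet) :
    sInf {n | ∃ (v : V) (c : G.Walk v v), c.IsCycle ∧ (e : Sym2 V) ∈ c.edges ∧ c.length = n} =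
      sInf {n | ∃ (v' : V') (c : G'.Walk v' v'),
        c.IsCycle ∧ (σ e : Sym2 V') ∈ c.edges ∧ c.length = n} := by
  classical
  haveI iE : Fintype G.edgeSet := Fintype.ofFinite _
  haveI iE' : Fintype G'.edgeSet := Fintype.ofFinite _
  have hm : Nat.card G'.edgeSet = Nat.card G.edgeSet := Nat.card_congr σ.symm
  have hdel : ∀ (f : G.edgeSet) (n : ℕ),
      cycAvoid G (f : Sym2 V) n = cycAvoid G' ((σ f : G'.edgeSet) : Sym2 V') n := by
    intro f n
    rw [← cycN_deleteEdges, ← cycN_deleteEdges, cycN_iso (hdeck f).some]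
  have key : ∀ n : ℕ, cycThru G (e : Sym2 V) n = cycThru G' ((σ e : G'.edgeSet) : Sym2 V') n := by
    intro n
    by_cases hn : n < Nat.card G.edgeSet
    · have hNN : cycN G n = cycN G' n := by
        have h3 : ∑ f : G.edgeSet, cycAvoid G (f : Sym2 V) n =
            ∑ f' : G'.edgeSet, cycAvoid G' (f' : Sym2 V') n := by
          rw [← Equiv.sum_comp σ (fun f' : G'.edgeSet => cycAvoid G' (f' : Sym2 V') n)]
          exact Finset.sum_congr rfl (fun f _ => hdel f n)
        rw [kelly, kelly, hm] at h3
        exact Nat.eq_of_mul_eq_mul_right (by omega) h3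
      have s1 := cycN_split G (e : Sym2 V) n
      have s2 := cycN_split G' ((σ e : G'.edgeSet) : Sym2 V') n
      have ha := hdel e n
      omega
    · have z1 : cycN G n = 0 :=
        cycN_eq_zero G hdeg (fun h => hnc ⟨hconn, h⟩) (by omega)
      have z2 : cycN G' n = 0 :=
        cycN_eq_zero G' hdeg' (fun h => hnc' ⟨hconn', h⟩) (by omega)
      have t1 := cycThru_le G (e : Sym2 V) n
      have t2 := cycThru_le G' ((σ e : G'.edgeSet) : Sym2 V') n
      omega
  congr 1
  ext n
  simp only [Set.mem_setOf_eq]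
  have h1 := exists_iff_cycThru_ne_zero G (e : Sym2 V) n
  have h2 := exists_iff_cycThru_ne_zero G' ((σ e : G'.edgeSet) : Sym2 V') n
  rw [key n] at h1
  exact h1.trans h2.symm
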